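/- A layered automaton A over a finite alphabet Σ is consistent if and only if it is uniformly semantically deterministic, i.e. L(⟦A⟧,p) = L(⟦A⟧,q) holds for all leaf states p, q with μ̂₁(p) = μ̂₁(q). -/

import Mathlib

open scoped Classical

noncomputable section

/-! ### Infinite words and the parity condition -/

/-- The minimal value occurring infinitely often in a sequence of priorities;
for (eventually) bounded sequences this is the `liminf`. -/
def minInfOften (pi : ℕ → ℕ) : ℕ := sInf {x : ℕ | ∀ N : ℕ, ∃ n : ℕ, N ≤ n ∧ pi n = x}

/-- The (min-)parity acceptance condition: the liminf of the priorities is even. -/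
def ParityAccept (pi : ℕ → ℕ) : Prop := Even (minInfOften pi)

/-- Prepend a finite word to an infinite word. -/
def prependW {α : Type} (u : List α) (w : ℕ → α) : ℕ → α := fun i =>
  if h : i < u.length then u.get ⟨i, h⟩ else w (i - u.length)

/-- The prefix of length `n` of an infinite word, as a list. -/
def wordPrefix {α : Type} (w : ℕ → α) (n : ℕ) : List α := List.ofFn (fun i : Fin n => w i)

/-- Drop the first `n` letters of an infinite word. -/
def wordDrop {α : Type} (w : ℕ → α) (n : ℕ) : ℕ → α := fun i => w (n + i)

/-- The periodic infinite word `v^ω` (junk if `v = []`). -/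
def perWord {α : Type} [Inhabited α] (v : List α) : ℕ → α := fun i => v.getD (i % v.length) default

/-! ### Layered automata -/

/-- A layered automaton over the alphabet `α` with `d` layers.  The (disjoint) layers
are encoded by the function `layer : Q → [1,d]`; each layer is a deterministic
transition system (partial transition function `δ`, which stays inside the layer);
`μ` sends each state of layer `x+1` to its parent in layer `x` (and is the identity
on layer `1`) and is a morphism of transition systems; layer `1` is complete, carries
the initial state, and all its states are reachable from the initial state. -/
structure Layered (Q α : Type) (d : ℕ) where
  layer : Q → ℕ
  layer_pos : ∀ q, 1 ≤ layer q
  layer_le : ∀ q, layer q ≤ d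
  δ : Q → α → Option Q
  δ_layer : ∀ q a q', δ q a = some q' → layer q' = layer q
  μ : Q → Q
  μ_layer : ∀ q, 1 < layer q → layer (μ q) + 1 = layer q
  μ_id : ∀ q, layer q = 1 → μ q = q
  μ_morph : ∀ q a q', 1 < layer q → δ q a = some q' → δ (μ q) a = some (μ q')
  init : Q
  init_layer : layer init = 1
  complete1 : ∀ q a, layer q = 1 → (δ q a).isSome = true
  reach1 : ∀ q, layer q = 1 →
    Relation.ReflTransGen (fun p p' => layer p = 1 ∧ ∃ a, δ p a = some p') init q

namespace Layered

variable {Q R α : Type} {d d' : ℕ}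

/-- The run of the (deterministic) layer transition systems on a finite word. -/
def runList (A : Layered Q α d) : Q → List α → Option Q
  | q, [] => some q
  | q, a :: u =>
    match A.δ q a with
    | some q' => runList A q' u
    | none => none

/-- `μ̂_x q`: the ancestor of `q` in layer `x` (image under the composed morphisms). -/
def muHat (A : Layered Q α d) (x : ℕ) (q : Q) : Q := (A.μ)^[A.layer q - x] q

/-- A leaf state: a state that is not in the image of any of the morphisms `μ_x`. -/
def IsLeaf (A : Layered Q α d) (q : Q) : Prop := ∀ p, 1 < A.layer p → A.μ p ≠ q

/-- `layer(q,a)`: the largest layer `x ≤ layer q` in which `δ_x (μ̂_x q) a` is defined. -/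
def layerOf (A : Layered Q α d) (q : Q) (a : α) : ℕ :=
  Nat.findGreatest (fun x => (A.δ (A.muHat x q) a).isSome = true) (A.layer q)

/-- A state `p` is an ancestor of `q`. -/
def IsAncestor (A : Layered Q α d) (p q : Q) : Prop :=
  A.layer p ≤ A.layer q ∧ A.muHat (A.layer p) q = p

/-! #### Safe languages and strong acceptance -/

/-- Membership of a finite word in the `x`-safe language of `q`. -/
def SafeFin (A : Layered Q α d) (x : ℕ) (q : Q) (u : List α) : Prop :=
  (A.runList (A.muHat x q) u).isSome = true

/-- Membership of an infinite word in the `x`-safe language of `q`. -/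
def SafeInf (A : Layered Q α d) (x : ℕ) (q : Q) (w : ℕ → α) : Prop :=
  ∀ n : ℕ, A.SafeFin x q (wordPrefix w n)

/-- `w` is strongly accepted by the state `p` (which lies in the even layer `x = layer p`):
`w` is `x`-safe from `p` and no decomposition `w = u·w'` admits a state `p'` of layer `x+1`
with a `u`-run from `p` to the parent of `p'` in `T_x` such that `w'` is `(x+1)`-safe from `p'`. -/
def StronglyAcc (A : Layered Q α d) (p : Q) (w : ℕ → α) : Prop :=
  Even (A.layer p) ∧ A.SafeInf (A.layer p) p w ∧
  ∀ (n : ℕ) (p' : Q), A.layer p' = A.layer p + 1 →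
    A.runList p (wordPrefix w n) = some (A.μ p') →
    ¬ A.SafeInf (A.layer p') p' (wordDrop w n)

/-- `w` is strongly rejected by `p` (lying in an odd layer). -/
def StronglyRej (A : Layered Q α d) (p : Q) (w : ℕ → α) : Prop :=
  Odd (A.layer p) ∧ A.SafeInf (A.layer p) p w ∧
  ∀ (n : ℕ) (p' : Q), A.layer p' = A.layer p + 1 →
    A.runList p (wordPrefix w n) = some (A.μ p') →
    ¬ A.SafeInf (A.layer p') p' (wordDrop w n)

/-- Consistency: no two states with the same layer-1 ancestor strongly accept
resp. strongly reject a common infinite word. -/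
def Consistent (A : Layered Q α d) : Prop :=
  ¬ ∃ (p p' : Q) (w : ℕ → α), A.muHat 1 p = A.muHat 1 p' ∧
      A.StronglyAcc p w ∧ A.StronglyRej p' w

/-- `w` is ultimately safe in layer `x`, for the automaton started in the
layer-1 state `q0`. -/
def UltSafeFrom (A : Layered Q α d) (q0 : Q) (x : ℕ) (w : ℕ → α) : Prop :=
  ∃ (n : ℕ) (p : Q), A.layer p = x ∧
    A.runList q0 (wordPrefix w n) = some (A.muHat 1 p) ∧
    A.SafeInf x p (wordDrop w n)

/-- Layered acceptance from `q0`: the maximal layer in which `w` is ultimately safe is even. -/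
def LayeredAcceptFrom (A : Layered Q α d) (q0 : Q) (w : ℕ → α) : Prop :=
  ∃ x : ℕ, Even x ∧ A.UltSafeFrom q0 x w ∧ ∀ y : ℕ, A.UltSafeFrom q0 y w → y ≤ x

/-- Layered rejection from `q0`: the maximal layer in which `w` is ultimately safe is odd. -/
def LayeredRejectFrom (A : Layered Q α d) (q0 : Q) (w : ℕ → α) : Prop :=
  ∃ x : ℕ, Odd x ∧ A.UltSafeFrom q0 x w ∧ ∀ y : ℕ, A.UltSafeFrom q0 y w → y ≤ x

/-! #### The semantics automaton `⟦A⟧` (a simple-by-priorities alternating parity automaton) -/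

/-- The priority of the letter `a` in the state `q` of `⟦A⟧`. -/
def semPrio (A : Layered Q α d) (q : Q) (a : α) : ℕ := A.layerOf q a

/-- The transitions of `⟦A⟧` (between leaf states): `q —a→ q'` iff, for
`x = layer(q,a)`, we have `δ_x (μ̂_x q) a = μ̂_x q'`; the transition carries priority `x`. -/
def semStep (A : Layered Q α d) (q : Q) (a : α) (q' : Q) : Prop :=
  A.IsLeaf q' ∧ A.δ (A.muHat (A.layerOf q a) q) a = some (A.muHat (A.layerOf q a) q')

/-- Runs of `⟦A⟧` over the infinite word `w`, starting in `p`. -/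
def IsSemRun (A : Layered Q α d) (w : ℕ → α) (p : Q) (ρ : ℕ → Q) : Prop :=
  ρ 0 = p ∧ ∀ i : ℕ, A.semStep (ρ i) (w i) (ρ (i + 1))

/-- The sequence of priorities produced by a run of `⟦A⟧` over `w`. -/
def runPrios (A : Layered Q α d) (w : ℕ → α) (ρ : ℕ → Q) : ℕ → ℕ :=
  fun i => A.semPrio (ρ i) (w i)

/-- A resolver for Eve in `⟦A⟧`: given the history (the finite run so far, as a list of
(state, letter) pairs), the current state and a letter of odd priority, it picks a successor. -/
def EveResolver (A : Layered Q α d) (σ : List (Q × α) → Q → α → Q) : Prop :=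
  ∀ (h : List (Q × α)) (q : Q) (a : α), Odd (A.semPrio q a) → A.semStep q a (σ h q a)

/-- A resolver for Adam in `⟦A⟧` (resolving the even-priority steps). -/
def AdamResolver (A : Layered Q α d) (τ : List (Q × α) → Q → α → Q) : Prop :=
  ∀ (h : List (Q × α)) (q : Q) (a : α), Even (A.semPrio q a) → A.semStep q a (τ h q a)

/-- A run is consistent with the Eve-resolver `σ`: every odd-priority step follows `σ`. -/
def ConsEve (A : Layered Q α d) (σ : List (Q × α) → Q → α → Q) (w : ℕ → α) (ρ : ℕ → Q) : Prop :=
  ∀ i : ℕ, Odd (A.semPrio (ρ i) (w i)) →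
    ρ (i + 1) = σ (List.ofFn fun j : Fin i => (ρ (j : ℕ), w (j : ℕ))) (ρ i) (w i)

/-- A run is consistent with the Adam-resolver `τ`: every even-priority step follows `τ`. -/
def ConsAdam (A : Layered Q α d) (τ : List (Q × α) → Q → α → Q) (w : ℕ → α) (ρ : ℕ → Q) : Prop :=
  ∀ i : ℕ, Even (A.semPrio (ρ i) (w i)) →
    ρ (i + 1) = τ (List.ofFn fun j : Fin i => (ρ (j : ℕ), w (j : ℕ))) (ρ i) (w i)

/-- Acceptance of `w` by `⟦A⟧` from the (leaf) state `p`: Eve has a winning strategy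
in the game `G(⟦A⟧,w)`, i.e. a resolver all of whose consistent runs satisfy parity. -/
def SemAccept (A : Layered Q α d) (p : Q) (w : ℕ → α) : Prop :=
  ∃ σ : List (Q × α) → Q → α → Q, A.EveResolver σ ∧
    ∀ ρ : ℕ → Q, A.IsSemRun w p ρ → A.ConsEve σ w ρ → ParityAccept (A.runPrios w ρ)

/-- Uniform semantic determinism: leaf states with the same layer-1 ancestor
recognise the same language in `⟦A⟧`. -/
def UnifSD (A : Layered Q α d) : Prop :=
  ∀ p q : Q, A.IsLeaf p → A.IsLeaf q → A.muHat 1 p = A.muHat 1 q →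
    ∀ w : ℕ → α, (A.SemAccept p w ↔ A.SemAccept q w)

/-! #### Longest suffix resolvers -/

/-- `v` is a suffix-witness to `r`: the layer of `r` has a run labelled `v` ending in `r`. -/
def suffixReaches (A : Layered Q α d) (r : Q) (v : List α) : Prop :=
  ∃ p : Q, A.layer p = A.layer r ∧ A.runList p v = some r

/-- The length of the longest suffix `v` of `u` such that the layer of `r` has a
run labelled `v` ending in `r`. -/
def longestSuffixLen (A : Layered Q α d) (u : List α) (r : Q) : ℕ :=
  Nat.findGreatest (fun k => k ≤ u.length ∧ A.suffixReaches r (u.drop (u.length - k))) u.length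

/-- A longest suffix resolver for Eve, initialised to `u0`: a valid Eve-resolver that,
at a step of odd priority `x` after having read `v`, moves to an `a`-successor `q'`
maximising the length of the longest `(x+1)`-suffix of `u0·v·a` to `μ̂_{x+1} q'`. -/
def IsLongestSuffixResolverE (A : Layered Q α d) (u0 : List α)
    (σ : List (Q × α) → Q → α → Q) : Prop :=
  A.EveResolver σ ∧
  ∀ (h : List (Q × α)) (q : Q) (a : α), Odd (A.semPrio q a) →
    ∀ q' : Q, A.semStep q a q' →
      A.longestSuffixLen (u0 ++ h.map Prod.snd ++ [a]) (A.muHat (A.semPrio q a + 1) q') ≤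
      A.longestSuffixLen (u0 ++ h.map Prod.snd ++ [a]) (A.muHat (A.semPrio q a + 1) (σ h q a))

/-- A longest suffix resolver for Adam, initialised to `u0` (symmetric, for even priorities). -/
def IsLongestSuffixResolverA (A : Layered Q α d) (u0 : List α)
    (τ : List (Q × α) → Q → α → Q) : Prop :=
  A.AdamResolver τ ∧
  ∀ (h : List (Q × α)) (q : Q) (a : α), Even (A.semPrio q a) →
    ∀ q' : Q, A.semStep q a q' →
      A.longestSuffixLen (u0 ++ h.map Prod.snd ++ [a]) (A.muHat (A.semPrio q a + 1) q') ≤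
      A.longestSuffixLen (u0 ++ h.map Prod.snd ++ [a]) (A.muHat (A.semPrio q a + 1) (τ h q a))

/-! #### The random walk on `⟦A⟧` -/

/-- The uniform step probability of the random walk of `⟦A⟧`. -/
def stepProb (A : Layered Q α d) (q : Q) (a : α) (q' : Q) : ENNReal :=
  if A.semStep q a q' then ((Nat.card {p : Q // A.semStep q a p} : ENNReal))⁻¹ else 0

/-- `m` is the Markov measure of the random walk of `⟦A⟧` over the word `w` started at `p`:
a probability measure on `ℕ → Q` whose cylinder probabilities are the products of the
uniform step probabilities. -/
def IsWalkMeasure [MeasurableSpace Q] (A : Layered Q α d) (w : ℕ → α) (p : Q)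
    (m : MeasureTheory.Measure (ℕ → Q)) : Prop :=
  MeasureTheory.IsProbabilityMeasure m ∧
  ∀ (n : ℕ) (s : Fin (n + 1) → Q),
    m {ρ : ℕ → Q | ∀ i : Fin (n + 1), ρ (i : ℕ) = s i} =
      (if s 0 = p then 1 else 0) *
        ∏ i : Fin n, A.stepProb (s i.castSucc) (w (i : ℕ)) (s i.succ)

/-! #### Normal form, centrality, safe minimality, central sequences -/

/-- Normal form: (N1) every layer `x ≥ 2` is a union of non-trivial SCCs, and
(N2) the safe language of every child is strictly smaller than that of its parent. -/
def NormalForm (A : Layered Q α d) : Prop :=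
  ∀ q : Q, 2 ≤ A.layer q →
    (∀ (u : List α) (q' : Q), A.runList q u = some q' →
      ∃ v : List α, v ≠ [] ∧ A.runList q' v = some q) ∧
    (∀ p : Q, 1 < A.layer p → A.μ p = q →
      ∃ u : List α, (A.runList q u).isSome = true ∧ A.runList p u = none)

/-- Inclusion of `x`-safe languages. -/
def SafeLE (A : Layered Q α d) (x : ℕ) (p q : Q) : Prop :=
  (∀ u : List α, A.SafeFin x p u → A.SafeFin x q u) ∧
  (∀ w : ℕ → α, A.SafeInf x p w → A.SafeInf x q w)

/-- Centralised: siblings (same parent) whose safe languages are included,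
lie in the same SCC of their layer. -/
def Centralised (A : Layered Q α d) : Prop :=
  ∀ p q : Q, 2 ≤ A.layer p → A.layer q = A.layer p →
    A.muHat (A.layer p - 1) p = A.muHat (A.layer p - 1) q →
    A.SafeLE (A.layer p) p q →
    (∃ u : List α, A.runList p u = some q) ∧ (∃ v : List α, A.runList q v = some p)

/-- `L(p) = L(q)`: all leaves above (the layer-1 ancestor of) `p` and all leaves above `q`
recognise the same language in `⟦A⟧`. -/
def LangEq1 (A : Layered Q α d) (p q : Q) : Prop :=
  ∀ l l' : Q, A.IsLeaf l → A.IsLeaf l' → A.muHat 1 l = A.muHat 1 p →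
    A.muHat 1 l' = A.muHat 1 q → ∀ w : ℕ → α, (A.SemAccept l w ↔ A.SemAccept l' w)

/-- The equivalence `p ≈_x q`: language equivalence together with equality of all
`y`-safe languages for `2 ≤ y ≤ x`. -/
def ApproxEq (A : Layered Q α d) (x : ℕ) (p q : Q) : Prop :=
  A.LangEq1 p q ∧ ∀ y : ℕ, 2 ≤ y → y ≤ x →
    ((∀ u : List α, A.SafeFin y p u ↔ A.SafeFin y q u) ∧
     (∀ w : ℕ → α, A.SafeInf y p w ↔ A.SafeInf y q w))

/-- Safe minimality: `≈_x`-equivalent states of the same layer are equal. -/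
def SafeMinimal (A : Layered Q α d) : Prop :=
  ∀ p q : Q, A.layer p = A.layer q → A.ApproxEq (A.layer p) p q → p = q

/-- `z` is a central sequence for the state `p` (of layer `x = layer p`). -/
def IsCentralSeq (A : Layered Q α d) (p : Q) (z : List α) : Prop :=
  z ≠ [] ∧ A.runList p z = some p ∧
  (∀ q : Q, A.layer q = A.layer p →
    A.muHat (A.layer p - 1) q = A.muHat (A.layer p - 1) p →
    (A.runList q z = some p ∨ A.runList q z = none)) ∧
  (∀ q' : Q, A.layer q' = A.layer p + 1 →
    A.muHat (A.layer p - 1) q' = A.muHat (A.layer p - 1) p →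
    A.runList q' z = none)

end Layered

/-! ### Morphisms of layered automata -/

/-- A morphism of layered automata. -/
structure IsLayMorphism {Q R α : Type} {d d' : ℕ} (A : Layered Q α d) (B : Layered R α d')
    (φ : Q → R) : Prop where
  map_init : φ A.init = B.init
  map_step : ∀ q a q', A.δ q a = some q' → B.δ (φ q) a = some (φ q')
  map_anc : ∀ p q, A.IsAncestor p q → B.IsAncestor (φ p) (φ q)

/-- A strong morphism of layered automata additionally preserves non-transitions. -/
def IsStrongLayMorphism {Q R α : Type} {d d' : ℕ} (A : Layered Q α d) (B : Layered R α d')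
    (φ : Q → R) : Prop :=
  IsLayMorphism A B φ ∧ ∀ q a, A.δ q a = none → B.δ (φ q) a = none

/-- An isomorphism of layered automata: a bijection on states that restricts to
isomorphisms of the layer transition systems, preserves the initial state, and
commutes with the morphisms `μ`. -/
structure IsLayIso {Q R α : Type} {d d' : ℕ} (A : Layered Q α d) (B : Layered R α d')
    (φ : Q ≃ R) : Prop where
  map_layer : ∀ q, B.layer (φ q) = A.layer q
  map_init : φ A.init = B.init
  map_mu : ∀ q, φ (A.μ q) = B.μ (φ q)
  map_step : ∀ q a, (A.δ q a).map φ = B.δ (φ q) a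

/-- `L(⟦A⟧) = L(⟦B⟧)`: the semantics automata (with any choice of initial leaf states
above the respective initial states) accept the same infinite words. -/
def SemLangEq {Q R α : Type} {d d' : ℕ} (A : Layered Q α d) (B : Layered R α d') : Prop :=
  ∀ (p : Q) (q : R), A.IsLeaf p → A.muHat 1 p = A.init → B.IsLeaf q → B.muHat 1 q = B.init →
    ∀ w : ℕ → α, (A.SemAccept p w ↔ B.SemAccept q w)

/-! ### Deterministic parity automata -/

/-- A deterministic parity automaton over `α` with priorities in `[1,d]`. -/
structure DPA (Q α : Type) (d : ℕ) where
  init : Q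
  next : Q → α → Q
  prio : Q → α → ℕ
  prio_pos : ∀ q a, 1 ≤ prio q a
  prio_le : ∀ q a, prio q a ≤ d

namespace DPA

variable {Q α : Type} {d : ℕ}

/-- The unique run of a DPA on an infinite word. -/
def run (B : DPA Q α d) (w : ℕ → α) : ℕ → Q
  | 0 => B.init
  | n + 1 => B.next (run B w n) (w n)

/-- Acceptance by a DPA: the priorities along the unique run satisfy parity. -/
def Accepts (B : DPA Q α d) (w : ℕ → α) : Prop :=
  ParityAccept (fun i => B.prio (B.run w i) (w i))

end DPA

/-- `L` is ω-regular: recognised by some deterministic parity automaton. -/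
def IsOmegaRegular {α : Type} (L : Set (ℕ → α)) : Prop :=
  ∃ (n d : ℕ) (B : DPA (Fin n) α d), ∀ w : ℕ → α, w ∈ L ↔ B.Accepts w

/-! ### Nondeterministic coBüchi automata -/

/-- A (complete) nondeterministic coBüchi automaton: transitions carry priorities in `{1,2}`. -/
structure NCA (Q α : Type) where
  init : Q
  trans : Q → α → ℕ → Q → Prop
  prio_mem : ∀ q a x q', trans q a x q' → x = 1 ∨ x = 2
  complete : ∀ q a, ∃ x q', trans q a x q'

namespace NCA

variable {Q α : Type}

/-- Nondeterministic acceptance from the state `q`. -/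
def AcceptFrom (B : NCA Q α) (q : Q) (w : ℕ → α) : Prop :=
  ∃ (ρ : ℕ → Q) (pri : ℕ → ℕ), ρ 0 = q ∧
    (∀ i : ℕ, B.trans (ρ i) (w i) (pri i) (ρ (i + 1))) ∧ ParityAccept pri

/-- Semantic determinism: every `a`-successor of `p` recognises `a⁻¹ L(p)`. -/
def SemDet (B : NCA Q α) : Prop :=
  ∀ p a x q, B.trans p a x q →
    ∀ w : ℕ → α, (B.AcceptFrom q w ↔ B.AcceptFrom p (prependW [a] w))

/-- Safe determinism: all `a`-transitions from a state carry the same priority, and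
there is at most one `a`-transition of priority `2` from each state. -/
def SafeDet (B : NCA Q α) : Prop :=
  (∀ q a x q' x' q'', B.trans q a x q' → B.trans q a x' q'' → x = x') ∧
  (∀ q a q' q'', B.trans q a 2 q' → B.trans q a 2 q'' → q' = q'')

/-- 1-saturation: priority-1 transitions go to all language-equivalent states. -/
def OneSaturated (B : NCA Q α) : Prop :=
  ∀ q a p p', B.trans q a 1 p →
    (∀ w : ℕ → α, (B.AcceptFrom p' w ↔ B.AcceptFrom p w)) → B.trans q a 1 p'

end NCA

/-! ### Simple-by-priorities alternating parity automata (abstract) -/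

/-- A simple-by-priorities alternating parity automaton: a complete transition system
over `α × [1,d]` in which all `a`-transitions from a state carry the same priority. -/
structure SPA (Q α : Type) (d : ℕ) where
  init : Q
  step : Q → α → Q → Prop
  prio : Q → α → ℕ
  prio_pos : ∀ q a, 1 ≤ prio q a
  prio_le : ∀ q a, prio q a ≤ d
  complete : ∀ q a, ∃ q', step q a q'

/-! ### The congruence on tuples of finite words -/

/-- The data of the congruence at one level (tuples of a fixed length,
represented as reversed lists of components: the head is the last component). -/
structure CongrLevel (α : Type) where
  bot : List (List α) → Prop
  eq : List (List α) → List (List α) → Prop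
  ptd : List (List α) → Prop

/-- Concatenate a finite word to the last component of a tuple
(tuples are represented as reversed lists: the head is the last component). -/
def tcat {α : Type} (t : List (List α)) (v : List α) : List (List α) :=
  match t with
  | h :: rest => (h ++ v) :: rest
  | [] => []

/-- Merge the last two components of a tuple. -/
def tmerge {α : Type} (t : List (List α)) : List (List α) :=
  match t with
  | u' :: h :: rest => (h ++ u') :: rest
  | t' => t'

/-- The congruence data at level `n` (handling tuples of length `n+1`), defined by
recursion on the level, following the inductive definition of `≈ ⊥`, `≈` and `pointed`. -/
def congrData {α : Type} [Inhabited α] (L : Set (ℕ → α)) : ℕ → CongrLevel α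
  | 0 =>
    { bot := fun _ => False
      eq := fun t s =>
        match t, s with
        | [u], [v] => ∀ w : ℕ → α, (prependW u w ∈ L ↔ prependW v w ∈ L)
        | _, _ => False
      ptd := fun _ => True }
  | n + 1 =>
    let C := congrData L n
    let bot : List (List α) → Prop := fun t =>
      match t with
      | u' :: ubar =>
        C.bot (tmerge (u' :: ubar)) ∨
        ∀ w : List α, w ≠ [] → C.eq (tcat (tmerge (u' :: ubar)) w) ubar →
          ((prependW ubar.reverse.flatten (perWord (u' ++ w)) ∈ L) ↔ Even (n + 1))
      | [] => True
    let eq : List (List α) → List (List α) → Prop := fun t s =>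
      C.eq (tmerge t) (tmerge s) ∧ ∀ v : List α, (bot (tcat t v) ↔ bot (tcat s v))
    let ptd : List (List α) → Prop := fun t =>
      match t with
      | u' :: ubar =>
        ¬ bot (u' :: ubar) ∧ C.ptd ubar ∧
        ∀ (vbar : List (List α)) (v' : List α), vbar.length = n + 1 → C.ptd vbar →
          C.eq (tcat vbar v') ubar → ¬ bot ((v' ++ u') :: vbar) →
          eq ((v' ++ u') :: vbar) (u' :: ubar)
      | [] => False
    { bot := bot, eq := eq, ptd := ptd }

/-- `t ≈ ⊥` (for a nonempty tuple `t`, in reversed representation). -/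
def TupBot {α : Type} [Inhabited α] (L : Set (ℕ → α)) (t : List (List α)) : Prop :=
  (congrData L (t.length - 1)).bot t

/-- `t ≈ s` (for nonempty tuples of the same length, in reversed representation). -/
def TupEq {α : Type} [Inhabited α] (L : Set (ℕ → α)) (t s : List (List α)) : Prop :=
  t.length = s.length ∧ (congrData L (t.length - 1)).eq t s

/-- `t` is pointed. -/
def TupPointed {α : Type} [Inhabited α] (L : Set (ℕ → α)) (t : List (List α)) : Prop :=
  (congrData L (t.length - 1)).ptd t

/-- `cls` exhibits `A` as (a copy of) the congruence automaton `A_≈` of `L`: its states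
are the `≈`-classes of pointed tuples (the layer being the tuple length), transitions
are given by concatenation in the last component, the initial state is the class of
`(ε)`, and the morphisms are given by merging the last two components. -/
structure IsCongrAut {α : Type} [Inhabited α] (L : Set (ℕ → α)) {Q : Type} {d : ℕ}
    (A : Layered Q α d) (cls : (t : List (List α)) → TupPointed L t → Q) : Prop where
  surj : ∀ q : Q, ∃ (t : List (List α)) (ht : TupPointed L t), cls t ht = q
  cls_eq : ∀ t ht s hs, cls t ht = cls s hs ↔ TupEq L t s
  layer_eq : ∀ t ht, A.layer (cls t ht) = t.length
  init_eq : ∀ h : TupPointed L [([] : List α)], cls [([] : List α)] h = A.init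
  step_some : ∀ t ht (a : α) (h' : TupPointed L (tcat t [a])),
    A.δ (cls t ht) a = some (cls (tcat t [a]) h')
  step_none : ∀ t ht (a : α), TupBot L (tcat t [a]) → A.δ (cls t ht) a = none
  mu_eq : ∀ (u' : List α) (ubar : List (List α)) (h : TupPointed L (u' :: ubar))
    (h' : TupPointed L (tmerge (u' :: ubar))), ubar ≠ [] →
    A.μ (cls (u' :: ubar) h) = cls (tmerge (u' :: ubar)) h'

end
noncomputable section Aux

open Layered

namespace Layered

variable {Q α : Type} {d : ℕ} (A : Layered Q α d)

/-! ### word lemmas -/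

theorem wordPrefix_succ {w : ℕ → α} {n : ℕ} :
    wordPrefix w (n + 1) = wordPrefix w n ++ [w n] := by
  rw [wordPrefix, List.ofFn_succ']
  simp [wordPrefix, List.concat_eq_append]

theorem length_wordPrefix {w : ℕ → α} {n : ℕ} : (wordPrefix w n).length = n := by
  simp [wordPrefix]

theorem wordDrop_wordDrop {w : ℕ → α} {a b : ℕ} :
    wordDrop (wordDrop w a) b = wordDrop w (a + b) := by
  funext i; simp [wordDrop, Nat.add_assoc]

theorem wordPrefix_add {w : ℕ → α} {n m : ℕ} :
    wordPrefix w (n + m) = wordPrefix w n ++ wordPrefix (wordDrop w n) m := by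
  induction m with
  | zero => simp [wordPrefix]
  | succ m ih =>
      rw [show n + (m+1) = (n+m)+1 from rfl, wordPrefix_succ, ih, wordPrefix_succ]
      simp [wordDrop]

theorem drop_wordPrefix {w : ℕ → α} {n k : ℕ} (h : k ≤ n) :
    (wordPrefix w n).drop k = wordPrefix (wordDrop w k) (n - k) := by
  have : n = k + (n - k) := by omega
  conv_lhs => rw [this, wordPrefix_add]
  have hl : (wordPrefix w k).length = k := length_wordPrefix
  have hdl : List.drop (wordPrefix w k).length (wordPrefix w k ++ wordPrefix (wordDrop w k) (n - k)) = wordPrefix (wordDrop w k) (n - k) := List.drop_left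
  rw [hl] at hdl
  rw [hdl]

/-! ### runList lemmas -/

theorem runList_append {q : Q} {u v : List α} :
    A.runList q (u ++ v) = (A.runList q u).bind (fun r => A.runList r v) := by
  induction u generalizing q with
  | nil => simp [runList]
  | cons a u ih =>
      simp only [List.cons_append, runList]
      cases h : A.δ q a with
      | none => simp
      | some q' => simp [ih]

theorem runList_singleton {q : Q} {a : α} : A.runList q [a] = A.δ q a := by
  cases h : A.δ q a <;> simp [runList, h]

theorem runList_none_append {q : Q} {u v : List α} (h : A.runList q u = none) :
    A.runList q (u ++ v) = none := by
  rw [runList_append, h]; rfl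

theorem runList_some_append {q r : Q} {u v : List α}
    (h : A.runList q (u ++ v) = some r) :
    ∃ z, A.runList q u = some z ∧ A.runList z v = some r := by
  rw [runList_append] at h
  cases hu : A.runList q u with
  | none => rw [hu] at h; simp at h
  | some z => rw [hu] at h; exact ⟨z, rfl, h⟩

theorem runList_layer {q q' : Q} {u : List α} (h : A.runList q u = some q') :
    A.layer q' = A.layer q := by
  induction u generalizing q with
  | nil => simp [runList] at h; rw [h]
  | cons a u ih =>
      simp only [runList] at h
      cases hδ : A.δ q a with
      | none => rw [hδ] at h; simp at h
      | some z => rw [hδ] at h; rw [ih h]; exact A.δ_layer q a z hδ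

theorem delta_mu {q q' : Q} {a : α} (h : A.δ q a = some q') :
    A.δ (A.μ q) a = some (A.μ q') := by
  rcases Nat.lt_or_ge 1 (A.layer q) with h1 | h1
  · exact A.μ_morph q a q' h1 h
  · have hq : A.layer q = 1 := le_antisymm h1 (A.layer_pos q)
    have hq' : A.layer q' = 1 := by rw [A.δ_layer q a q' h, hq]
    rw [A.μ_id q hq, A.μ_id q' hq', h]

theorem delta_mu_iter {q q' : Q} {a : α} (k : ℕ) (h : A.δ q a = some q') :
    A.δ ((A.μ)^[k] q) a = some ((A.μ)^[k] q') := by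
  induction k with
  | zero => exact h
  | succ k ih =>
      rw [Function.iterate_succ_apply', Function.iterate_succ_apply']
      exact A.delta_mu ih

theorem runList_mu {q q' : Q} {u : List α} (k : ℕ) (h : A.runList q u = some q') :
    A.runList ((A.μ)^[k] q) u = some ((A.μ)^[k] q') := by
  induction u generalizing q with
  | nil => simp [runList] at h ⊢; rw [h]
  | cons a u ih =>
      simp only [runList] at h ⊢
      cases hδ : A.δ q a with
      | none => rw [hδ] at h; simp at h
      | some z =>
          rw [hδ] at h
          rw [A.delta_mu_iter k hδ]
          exact ih h

theorem complete_runList {q : Q} (hq : A.layer q = 1) (u : List α) :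
    (A.runList q u).isSome = true := by
  induction u generalizing q with
  | nil => simp [runList]
  | cons a u ih =>
      simp only [runList]
      have := A.complete1 q a hq
      cases hδ : A.δ q a with
      | none => rw [hδ] at this; simp at this
      | some z =>
          have hz : A.layer z = 1 := by rw [A.δ_layer q a z hδ, hq]
          exact ih hz

/-! ### muHat lemmas -/

theorem layer_iterate_mu {q : Q} {k : ℕ} (h : k ≤ A.layer q - 1) :
    A.layer ((A.μ)^[k] q) = A.layer q - k := by
  induction k with
  | zero => simp
  | succ k ih =>
      have hk : k ≤ A.layer q - 1 := by omega
      have h1 : 1 < A.layer ((A.μ)^[k] q) := by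
        rw [ih hk]; have := A.layer_pos q; omega
      rw [Function.iterate_succ_apply']
      have := A.μ_layer _ h1
      rw [ih hk] at this
      omega

theorem layer_muHat {q : Q} {x : ℕ} (h1 : 1 ≤ x) (h2 : x ≤ A.layer q) :
    A.layer (A.muHat x q) = x := by
  unfold muHat
  rw [A.layer_iterate_mu (by omega)]
  omega

theorem muHat_self {q : Q} {x : ℕ} (h : A.layer q = x) : A.muHat x q = q := by
  unfold muHat; rw [h]; simp

theorem muHat_muHat {q : Q} {x y : ℕ} (h1 : 1 ≤ x) (hxy : x ≤ y) (hy : y ≤ A.layer q) :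
    A.muHat x (A.muHat y q) = A.muHat x q := by
  have hly : A.layer (A.muHat y q) = y := A.layer_muHat (by omega) hy
  show (A.μ)^[A.layer (A.muHat y q) - x] (A.muHat y q) = _
  rw [hly]
  unfold muHat
  rw [← Function.iterate_add_apply]
  congr 1
  omega

theorem muHat_mu_succ {q : Q} {x : ℕ} (h1 : 1 ≤ x) (h : x < A.layer q) :
    A.μ (A.muHat (x + 1) q) = A.muHat x q := by
  unfold muHat
  rw [show A.layer q - x = (A.layer q - (x+1)) + 1 by omega, Function.iterate_succ_apply']

theorem muHat_one_of_above {l r : Q} (hx : 1 ≤ A.layer r) (hle : A.layer r ≤ A.layer l)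
    (h : A.muHat (A.layer r) l = r) : A.muHat 1 l = A.muHat 1 r := by
  rw [← h, A.muHat_muHat le_rfl hx hle]

end Layered
end Aux
namespace Layered

variable {Q α : Type} {d : ℕ} (A : Layered Q α d)

/-! ### layerOf lemmas -/

theorem layerOf_pos (q : Q) (a : α) : 1 ≤ A.layerOf q a := by
  apply Nat.le_findGreatest (A.layer_pos q)
  have h1 : A.layer (A.muHat 1 q) = 1 := A.layer_muHat le_rfl (A.layer_pos q)
  exact A.complete1 _ a h1

theorem layerOf_le (q : Q) (a : α) : A.layerOf q a ≤ A.layer q :=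
  Nat.findGreatest_le _

theorem layerOf_spec (q : Q) (a : α) : (A.δ (A.muHat (A.layerOf q a) q) a).isSome = true := by
  have h1 : A.layer (A.muHat 1 q) = 1 := A.layer_muHat le_rfl (A.layer_pos q)
  exact Nat.findGreatest_spec (P := fun x => (A.δ (A.muHat x q) a).isSome = true) (m := 1)
    (A.layer_pos q) (A.complete1 _ a h1)

theorem le_layerOf {q : Q} {a : α} {x : ℕ} (hx : x ≤ A.layer q)
    (hP : (A.δ (A.muHat x q) a).isSome = true) : x ≤ A.layerOf q a :=
  Nat.le_findGreatest hx hP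

theorem layerOf_gt_none {q : Q} {a : α} {x : ℕ} (h : A.layerOf q a < x)
    (hx : x ≤ A.layer q) : A.δ (A.muHat x q) a = none := by
  have := Nat.findGreatest_is_greatest (P := fun x => (A.δ (A.muHat x q) a).isSome = true) h hx
  cases hδ : A.δ (A.muHat x q) a with
  | none => rfl
  | some r => exact absurd (show (A.δ (A.muHat x q) a).isSome = true by rw [hδ]; rfl) this

theorem muHat_iterate {r : Q} {x z : ℕ} (h : A.layer r = z) :
    A.muHat x r = (A.μ)^[z - x] r := by
  unfold muHat; rw [h]

/-! ### semStep lemmas -/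

theorem layerOf_le_layer_of_semStep {q q' : Q} {a : α} (h : A.semStep q a q') :
    A.layerOf q a ≤ A.layer q' := by
  by_contra hlt
  push_neg at hlt
  have h2 := h.2
  have : A.muHat (A.layerOf q a) q' = q' := by
    unfold muHat
    rw [show A.layer q' - A.layerOf q a = 0 by omega]
    rfl
  rw [this] at h2
  have hl1 : A.layer (A.muHat (A.layerOf q a) q) = A.layerOf q a :=
    A.layer_muHat (A.layerOf_pos q a) (A.layerOf_le q a)
  have := A.δ_layer _ a _ h2
  omega

theorem semStep_proj {q q' : Q} {a : α} {x : ℕ} (h : A.semStep q a q')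
    (hx1 : 1 ≤ x) (hx : x ≤ A.layerOf q a) :
    A.δ (A.muHat x q) a = some (A.muHat x q') ∧ x ≤ A.layer q' := by
  set z := A.layerOf q a with hz
  have hzq : z ≤ A.layer q := A.layerOf_le q a
  have hzq' : z ≤ A.layer q' := A.layerOf_le_layer_of_semStep h
  have h2 := h.2
  have key := A.delta_mu_iter (z - x) h2
  have e1 : (A.μ)^[z - x] (A.muHat z q) = A.muHat x q := by
    rw [← A.muHat_iterate (A.layer_muHat (by omega) hzq), A.muHat_muHat hx1 hx hzq]
  have e2 : (A.μ)^[z - x] (A.muHat z q') = A.muHat x q' := by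
    rw [← A.muHat_iterate (A.layer_muHat (by omega) hzq'), A.muHat_muHat hx1 hx hzq']
  rw [e1, e2] at key
  exact ⟨key, le_trans hx hzq'⟩

/-! ### leaves -/

theorem exists_leaf_above_aux : ∀ (n : ℕ) (r : Q), d - A.layer r ≤ n →
    ∃ l, A.IsLeaf l ∧ A.layer r ≤ A.layer l ∧ A.muHat (A.layer r) l = r := by
  intro n
  induction n with
  | zero =>
      intro r hr
      by_cases hleaf : A.IsLeaf r
      · exact ⟨r, hleaf, le_rfl, A.muHat_self rfl⟩
      · exfalso
        unfold IsLeaf at hleaf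
        push_neg at hleaf
        obtain ⟨p, hp1, hp2⟩ := hleaf
        have := A.μ_layer p hp1
        rw [hp2] at this
        have := A.layer_le p
        omega
  | succ n ih =>
      intro r hr
      by_cases hleaf : A.IsLeaf r
      · exact ⟨r, hleaf, le_rfl, A.muHat_self rfl⟩
      · unfold IsLeaf at hleaf
        push_neg at hleaf
        obtain ⟨p, hp1, hp2⟩ := hleaf
        have hlp : A.layer p = A.layer r + 1 := by
          have := A.μ_layer p hp1; rw [hp2] at this; omega
        have hpd : d - A.layer p ≤ n := by
          have := A.layer_le p; omega
        obtain ⟨l, hl, hle, hmu⟩ := ih p hpd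
        refine ⟨l, hl, by omega, ?_⟩
        have h1 : 1 ≤ A.layer r := A.layer_pos r
        have : A.muHat (A.layer r) l = A.μ (A.muHat (A.layer r + 1) l) :=
          (A.muHat_mu_succ h1 (by omega)).symm
        rw [this, ← hlp, hmu, hp2]

theorem exists_leaf_above (r : Q) :
    ∃ l, A.IsLeaf l ∧ A.layer r ≤ A.layer l ∧ A.muHat (A.layer r) l = r :=
  A.exists_leaf_above_aux (d - A.layer r) r le_rfl

theorem semStep_complete (q : Q) (a : α) : ∃ q', A.semStep q a q' := by
  have hs := A.layerOf_spec q a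
  cases hδ : A.δ (A.muHat (A.layerOf q a) q) a with
  | none => rw [hδ] at hs; simp at hs
  | some r =>
      have hlr : A.layer r = A.layerOf q a := by
        rw [A.δ_layer _ a _ hδ]
        exact A.layer_muHat (A.layerOf_pos q a) (A.layerOf_le q a)
      obtain ⟨l, hl, hle, hmu⟩ := A.exists_leaf_above r
      refine ⟨l, hl, ?_⟩
      rw [hδ]
      congr 1
      rw [← hlr, hmu]

end Layered
/-! ### minInfOften lemmas -/

section MIO

def InfOftenSet (pi : ℕ → ℕ) : Set ℕ := {x : ℕ | ∀ N : ℕ, ∃ n : ℕ, N ≤ n ∧ pi n = x}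

theorem minInfOften_eq_sInf (pi : ℕ → ℕ) : minInfOften pi = sInf (InfOftenSet pi) := rfl

theorem infOftenSet_nonempty {pi : ℕ → ℕ} {D : ℕ} (h : ∀ i, pi i ≤ D) :
    (InfOftenSet pi).Nonempty := by
  by_contra hne
  rw [Set.not_nonempty_iff_eq_empty] at hne
  have hall : ∀ v, ∃ N, ∀ n, N ≤ n → pi n ≠ v := by
    intro v
    have hv : v ∉ InfOftenSet pi := by rw [hne]; exact Set.notMem_empty v
    simp only [InfOftenSet, Set.mem_setOf_eq] at hv
    push_neg at hv
    exact hv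
  choose N hN using hall
  set M := (Finset.range (D + 1)).sup N with hM
  have hpM : pi M ≤ D := h M
  have : N (pi M) ≤ M := by
    apply Finset.le_sup
    simp [Finset.mem_range]; omega
  exact hN (pi M) M this rfl

theorem minInfOften_mem {pi : ℕ → ℕ} {D : ℕ} (h : ∀ i, pi i ≤ D) :
    minInfOften pi ∈ InfOftenSet pi :=
  Nat.sInf_mem (infOftenSet_nonempty h)

theorem minInfOften_eventually_ge {pi : ℕ → ℕ} {D : ℕ} (h : ∀ i, pi i ≤ D) :
    ∃ N, ∀ n, N ≤ n → minInfOften pi ≤ pi n := by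
  set y := minInfOften pi with hy
  have hy' : y = sInf (InfOftenSet pi) := hy.symm ▸ minInfOften_eq_sInf pi
  have hlow : ∀ v, v < y → ∃ N, ∀ n, N ≤ n → pi n ≠ v := by
    intro v hv
    have : v ∉ InfOftenSet pi := by
      intro hmem
      have hs := Nat.sInf_le hmem
      rw [← hy'] at hs
      omega
    simp only [InfOftenSet, Set.mem_setOf_eq] at this
    push_neg at this
    exact this
  choose N hN using fun v => fun (hv : v < y) => hlow v hv
  classical
  refine ⟨(Finset.range y).sup (fun v => if hv : v < y then N v hv else 0), ?_⟩
  intro n hn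
  by_contra hlt
  push_neg at hlt
  have hv : pi n < y := hlt
  have : N (pi n) hv ≤ n := by
    refine le_trans ?_ hn
    have : pi n ∈ Finset.range y := by simp [Finset.mem_range]; omega
    have := Finset.le_sup (f := fun v => if hv : v < y then N v hv else 0) this
    simpa [hv] using this
  exact hN (pi n) hv n this rfl

theorem minInfOften_eq_of {pi : ℕ → ℕ} {x : ℕ}
    (h1 : ∃ N, ∀ n, N ≤ n → x ≤ pi n) (h2 : ∀ N, ∃ n, N ≤ n ∧ pi n = x) :
    minInfOften pi = x := by
  have hx : x ∈ InfOftenSet pi := h2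
  apply le_antisymm (Nat.sInf_le hx)
  have hmem : minInfOften pi ∈ InfOftenSet pi := Nat.sInf_mem ⟨x, hx⟩
  obtain ⟨N, hN⟩ := h1
  obtain ⟨n, hn1, hn2⟩ := hmem N
  rw [minInfOften_eq_sInf] at hn2
  rw [← hn2]
  exact hN n hn1

end MIO

namespace Layered

variable {Q α : Type} {d : ℕ} (A : Layered Q α d)

/-! ### the longest-suffix choice -/

theorem lsChoice_exists [Fintype Q] (h : List (Q × α)) (q : Q) (a : α) :
    ∃ q', A.semStep q a q' ∧ ∀ q'', A.semStep q a q'' →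
      A.longestSuffixLen (h.map Prod.snd ++ [a]) (A.muHat (A.semPrio q a + 1) q'') ≤
      A.longestSuffixLen (h.map Prod.snd ++ [a]) (A.muHat (A.semPrio q a + 1) q') := by
  classical
  obtain ⟨q0, hq0⟩ := A.semStep_complete q a
  have hne : (Finset.univ.filter (fun q' => A.semStep q a q')).Nonempty :=
    ⟨q0, by simp [hq0]⟩
  obtain ⟨b, hb, hmax⟩ := Finset.exists_max_image (Finset.univ.filter (fun q' => A.semStep q a q'))
    (fun q' => A.longestSuffixLen (h.map Prod.snd ++ [a]) (A.muHat (A.semPrio q a + 1) q')) hne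
  simp only [Finset.mem_filter, Finset.mem_univ, true_and] at hb hmax
  exact ⟨b, hb, fun q'' hq'' => hmax q'' (by simp [hq''])⟩

noncomputable def lsChoice [Fintype Q] (h : List (Q × α)) (q : Q) (a : α) : Q :=
  (A.lsChoice_exists h q a).choose

theorem lsChoice_semStep [Fintype Q] (h : List (Q × α)) (q : Q) (a : α) :
    A.semStep q a (A.lsChoice h q a) :=
  (A.lsChoice_exists h q a).choose_spec.1

theorem lsChoice_max [Fintype Q] (h : List (Q × α)) (q : Q) (a : α) :
    ∀ q'', A.semStep q a q'' →
      A.longestSuffixLen (h.map Prod.snd ++ [a]) (A.muHat (A.semPrio q a + 1) q'') ≤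
      A.longestSuffixLen (h.map Prod.snd ++ [a]) (A.muHat (A.semPrio q a + 1) (A.lsChoice h q a)) :=
  (A.lsChoice_exists h q a).choose_spec.2

/-! ### construction of runs -/

/-- history of a run -/
def histOf (ρ : ℕ → Q) (w : ℕ → α) (i : ℕ) : List (Q × α) :=
  List.ofFn (fun j : Fin i => (ρ (j : ℕ), w (j : ℕ)))

theorem histOf_map_snd (ρ : ℕ → Q) (w : ℕ → α) (i : ℕ) :
    (histOf ρ w i).map Prod.snd = wordPrefix w i := by
  unfold histOf wordPrefix
  rw [List.map_ofFn]
  rfl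

theorem exists_run (w : ℕ → α) (l : Q) (f g : List (Q × α) → Q → α → Q)
    (hf : ∀ h q a, Odd (A.semPrio q a) → A.semStep q a (f h q a))
    (hg : ∀ h q a, Even (A.semPrio q a) → A.semStep q a (g h q a)) :
    ∃ ρ : ℕ → Q, A.IsSemRun w l ρ ∧
      (∀ i, Odd (A.semPrio (ρ i) (w i)) → ρ (i + 1) = f (histOf ρ w i) (ρ i) (w i)) ∧
      (∀ i, Even (A.semPrio (ρ i) (w i)) → ρ (i + 1) = g (histOf ρ w i) (ρ i) (w i)) := by
  classical
  let step : ℕ → (List (Q × α) × Q) → (List (Q × α) × Q) := fun i s =>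
    (s.1 ++ [(s.2, w i)],
      if Odd (A.semPrio s.2 (w i)) then f s.1 s.2 (w i) else g s.1 s.2 (w i))
  let F : ℕ → List (Q × α) × Q := fun n => Nat.rec (([], l) : List (Q × α) × Q) step n
  have hF : ∀ n, F (n + 1) = step n (F n) := fun n => rfl
  set ρ : ℕ → Q := fun n => (F n).2 with hρ
  have hhist : ∀ n, (F n).1 = histOf ρ w n := by
    intro n
    induction n with
    | zero => simp [F, histOf]
    | succ n ih =>
        rw [hF n]
        show (F n).1 ++ [(ρ n, w n)] = _
        rw [ih]
        unfold histOf
        rw [List.ofFn_succ']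
        simp [List.concat_eq_append]
  have hstep : ∀ i, ρ (i + 1) =
      if Odd (A.semPrio (ρ i) (w i)) then f (histOf ρ w i) (ρ i) (w i)
      else g (histOf ρ w i) (ρ i) (w i) := by
    intro i
    show (F (i+1)).2 = _
    rw [hF i]
    show (if Odd (A.semPrio (ρ i) (w i)) then f (F i).1 (ρ i) (w i)
      else g (F i).1 (ρ i) (w i)) = _
    rw [hhist i]
  refine ⟨ρ, ⟨rfl, ?_⟩, ?_, ?_⟩
  · intro i
    rw [hstep i]
    by_cases hodd : Odd (A.semPrio (ρ i) (w i))
    · rw [if_pos hodd]; exact hf _ _ _ hodd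
    · rw [if_neg hodd]; exact hg _ _ _ (Nat.not_odd_iff_even.mp hodd)
  · intro i hodd; rw [hstep i, if_pos hodd]
  · intro i heven; rw [hstep i, if_neg (by rwa [Nat.not_odd_iff_even])]

end Layered
namespace Layered

variable {Q α : Type} {d : ℕ} (A : Layered Q α d)

/-! ### run tracking -/

theorem trackFrom {w : ℕ → α} {ρ : ℕ → Q}
    (hstep : ∀ i, A.semStep (ρ i) (w i) (ρ (i + 1))) {x n : ℕ} (hx1 : 1 ≤ x)
    (h : ∀ i, n ≤ i → x ≤ A.layerOf (ρ i) (w i)) :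
    ∀ m, x ≤ A.layer (ρ (n + m)) ∧
      A.runList (A.muHat x (ρ n)) (wordPrefix (wordDrop w n) m) =
        some (A.muHat x (ρ (n + m))) := by
  intro m
  induction m with
  | zero =>
      exact ⟨le_trans (h n le_rfl) (A.layerOf_le _ _), by simp [wordPrefix, runList]⟩
  | succ m ih =>
      obtain ⟨hl, hr⟩ := ih
      have hx : x ≤ A.layerOf (ρ (n + m)) (w (n + m)) := h _ (by omega)
      obtain ⟨hδ, hl'⟩ := A.semStep_proj (hstep (n + m)) hx1 hx
      refine ⟨hl', ?_⟩
      rw [wordPrefix_succ, runList_append, hr, Option.bind_some]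
      show A.runList (A.muHat x (ρ (n + m))) [w (n + m)] = _
      rw [runList_singleton, hδ]
      rfl

/-- The layer-1 state of a semantic run tracks the layer-1 run. -/
theorem track_one {w : ℕ → α} {ρ : ℕ → Q}
    (hstep : ∀ i, A.semStep (ρ i) (w i) (ρ (i + 1))) (n : ℕ) :
    A.runList (A.muHat 1 (ρ 0)) (wordPrefix w n) = some (A.muHat 1 (ρ n)) := by
  have h0 := (A.trackFrom hstep (n := 0) le_rfl (fun i _ => A.layerOf_pos (ρ i) (w i)) n).2
  have : wordPrefix (wordDrop w 0) n = wordPrefix w n := by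
    unfold wordPrefix wordDrop
    simp [Nat.zero_add]
  rw [this] at h0
  simpa using h0

/-! ### liminf of priorities forced by strong acceptance/rejection -/

theorem strong_liminf {w : ℕ → α} {ρ : ℕ → Q} {p l : Q} {x : ℕ}
    (hsr : A.IsSemRun w l ρ) (hpx : A.layer p = x) (hx1 : 1 ≤ x)
    (hsafe : A.SafeInf x p w)
    (hne : ∀ (n : ℕ) (p' : Q), A.layer p' = x + 1 →
      A.runList p (wordPrefix w n) = some (A.μ p') → ¬ A.SafeInf (A.layer p') p' (wordDrop w n))
    (hlx : x ≤ A.layer l) (hl : A.muHat x l = p) :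
    minInfOften (A.runPrios w ρ) = x := by
  obtain ⟨hρ0, hstep⟩ := hsr
  have hmux : A.muHat x p = p := A.muHat_self hpx
  -- the invariant
  have inv : ∀ i, x ≤ A.layer (ρ i) ∧
      A.runList p (wordPrefix w i) = some (A.muHat x (ρ i)) := by
    intro i
    induction i with
    | zero =>
        refine ⟨by rw [hρ0]; exact hlx, ?_⟩
        rw [hρ0, hl]
        simp [wordPrefix, runList]
    | succ i ih =>
        obtain ⟨hli, hri⟩ := ih
        have hsafe' := hsafe (i + 1)
        unfold SafeFin at hsafe'
        rw [hmux, wordPrefix_succ, runList_append, hri, Option.bind_some,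
          runList_singleton] at hsafe'
        have hxlo : x ≤ A.layerOf (ρ i) (w i) := A.le_layerOf hli hsafe'
        obtain ⟨hδ, hl'⟩ := A.semStep_proj (hstep i) hx1 hxlo
        refine ⟨hl', ?_⟩
        rw [wordPrefix_succ, runList_append, hri, Option.bind_some, runList_singleton, hδ]
  have hpri : ∀ i, x ≤ A.layerOf (ρ i) (w i) := by
    intro i
    obtain ⟨hli, hri⟩ := inv i
    have hsafe' := hsafe (i + 1)
    unfold SafeFin at hsafe'
    rw [hmux, wordPrefix_succ, runList_append, hri, Option.bind_some,
      runList_singleton] at hsafe'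
    exact A.le_layerOf hli hsafe'
  apply minInfOften_eq_of ⟨0, fun n _ => hpri n⟩
  by_contra hcon
  push_neg at hcon
  obtain ⟨N, hN⟩ := hcon
  have hN' : ∀ n, N ≤ n → x + 1 ≤ A.layerOf (ρ n) (w n) := by
    intro n hn
    have h1 := hpri n
    have h2 : A.layerOf (ρ n) (w n) ≠ x := hN n hn
    omega
  have hlN : x + 1 ≤ A.layer (ρ N) := le_trans (hN' N le_rfl) (A.layerOf_le _ _)
  set p' := A.muHat (x + 1) (ρ N) with hp'
  have hlay' : A.layer p' = x + 1 := A.layer_muHat (by omega) hlN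
  have hμp' : A.μ p' = A.muHat x (ρ N) := A.muHat_mu_succ hx1 (by omega)
  refine hne N p' hlay' ?_ ?_
  · rw [hμp']; exact (inv N).2
  · rw [hlay']
    intro m
    unfold SafeFin
    rw [A.muHat_self hlay']
    rw [(A.trackFrom hstep (x := x + 1) (n := N) (by omega) hN' m).2]
    rfl

/-! ### shifting strong acceptance along the run -/

theorem strong_shift {w₀ : ℕ → α} {p p₁ : Q} {k : ℕ}
    (hsafe : A.SafeInf (A.layer p) p w₀)
    (hne : ∀ (n : ℕ) (p' : Q), A.layer p' = A.layer p + 1 →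
      A.runList p (wordPrefix w₀ n) = some (A.μ p') →
      ¬ A.SafeInf (A.layer p') p' (wordDrop w₀ n))
    (hrun : A.runList p (wordPrefix w₀ k) = some p₁) :
    A.layer p₁ = A.layer p ∧ A.SafeInf (A.layer p₁) p₁ (wordDrop w₀ k) ∧
      (∀ (n : ℕ) (p' : Q), A.layer p' = A.layer p₁ + 1 →
        A.runList p₁ (wordPrefix (wordDrop w₀ k) n) = some (A.μ p') →
        ¬ A.SafeInf (A.layer p') p' (wordDrop (wordDrop w₀ k) n)) := by
  have hl : A.layer p₁ = A.layer p := A.runList_layer hrun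
  have hmux : A.muHat (A.layer p) p = p := A.muHat_self rfl
  refine ⟨hl, ?_, ?_⟩
  · intro m
    have hs := hsafe (k + m)
    unfold SafeFin at hs ⊢
    rw [hmux, wordPrefix_add, runList_append, hrun, Option.bind_some] at hs
    rwa [A.muHat_self rfl]
  · intro n p' hlay hr'
    have hlay' : A.layer p' = A.layer p + 1 := by rw [hlay, hl]
    have := hne (k + n) p' hlay' (by
      rw [wordPrefix_add, runList_append, hrun, Option.bind_some]; exact hr')
    rw [wordDrop_wordDrop]
    exact this

end Layered
namespace Layered

variable {Q α : Type} {d : ℕ} (A : Layered Q α d)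

theorem consistent_of_unifSD (h : A.UnifSD) : A.Consistent := by
  rintro ⟨p, p', w, hμ, ⟨hev, hsafe, hne⟩, ⟨hod, hsafe', hne'⟩⟩
  have hx1 : 1 ≤ A.layer p := A.layer_pos p
  have hx1' : 1 ≤ A.layer p' := A.layer_pos p'
  obtain ⟨l, hlleaf, hlle, hlmu⟩ := A.exists_leaf_above p
  obtain ⟨l', hlleaf', hlle', hlmu'⟩ := A.exists_leaf_above p'
  have hμl : A.muHat 1 l = A.muHat 1 l' := by
    rw [A.muHat_one_of_above hx1 hlle hlmu, A.muHat_one_of_above hx1' hlle' hlmu', hμ]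
  have hSA : A.SemAccept l w := by
    refine ⟨fun _ q a => Classical.choose (A.semStep_complete q a),
      fun _ q a _ => Classical.choose_spec (A.semStep_complete q a), ?_⟩
    intro ρ hsr _
    unfold ParityAccept
    rw [A.strong_liminf hsr rfl hx1 hsafe hne hlle hlmu]
    exact hev
  have hSA' : ¬ A.SemAccept l' w := by
    rintro ⟨σ, hσ, hall⟩
    obtain ⟨ρ, hsr, hodd, _⟩ := A.exists_run w l' σ
      (fun _ q a => Classical.choose (A.semStep_complete q a)) hσ
      (fun _ q a _ => Classical.choose_spec (A.semStep_complete q a))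
    have hcons : A.ConsEve σ w ρ := hodd
    have hP := hall ρ hsr hcons
    unfold ParityAccept at hP
    rw [A.strong_liminf hsr rfl hx1' hsafe' hne' hlle' hlmu'] at hP
    exact (Nat.not_even_iff_odd.mpr hod) hP
  exact hSA' ((h l l' hlleaf hlleaf' hμl w).mp hSA)

end Layered
namespace Layered

variable {Q α : Type} {d : ℕ} (A : Layered Q α d)

set_option maxHeartbeats 1000000 in
theorem run_parity [Fintype Q] {w : ℕ → α} {q0 p₀ l : Q} {xs n₀ : ℕ}
    (hcons : A.Consistent)
    (hx1 : 1 ≤ xs) (hp₀l : A.layer p₀ = xs)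
    (hq0run : A.runList q0 (wordPrefix w n₀) = some (A.muHat 1 p₀))
    (hsafe₀ : A.SafeInf xs p₀ (wordDrop w n₀))
    (hne₀ : ∀ (m : ℕ) (p'' : Q), A.layer p'' = xs + 1 →
      A.runList p₀ (wordPrefix (wordDrop w n₀) m) = some (A.μ p'') →
      ¬ A.SafeInf (A.layer p'') p'' (wordDrop (wordDrop w n₀) m))
    (hl1 : A.muHat 1 l = q0)
    {ρ : ℕ → Q} (hsr : A.IsSemRun w l ρ)
    (hls : ∀ i, (Even (A.semPrio (ρ i) (w i)) ↔ ¬ Even xs) →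
      ρ (i + 1) = A.lsChoice (histOf ρ w i) (ρ i) (w i)) :
    (Even (minInfOften (A.runPrios w ρ)) ↔ Even xs) := by
  obtain ⟨hρ0, hstep⟩ := hsr
  by_contra hpar
  set y := minInfOften (A.runPrios w ρ) with hy
  have hEy : Even y ↔ ¬ Even xs := by tauto
  have hbd : ∀ i, A.runPrios w ρ i ≤ d :=
    fun i => le_trans (A.layerOf_le _ _) (A.layer_le _)
  have hio : ∀ N, ∃ n, N ≤ n ∧ A.layerOf (ρ n) (w n) = y := minInfOften_mem hbd
  obtain ⟨n₁', hev'⟩ := minInfOften_eventually_ge hbd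
  have hy1 : 1 ≤ y := by
    obtain ⟨m, _, hm⟩ := hio 0
    rw [← hm]; exact A.layerOf_pos _ _
  set n₁ := max n₀ n₁' with hn₁
  have hev : ∀ i, n₁ ≤ i → y ≤ A.layerOf (ρ i) (w i) := by
    intro i hi
    exact hev' i (le_trans (le_max_right _ _) hi)
  set q₁ := A.muHat y (ρ n₁) with hq₁
  have hlρn₁ : y ≤ A.layer (ρ n₁) := le_trans (hev n₁ le_rfl) (A.layerOf_le _ _)
  have hq₁l : A.layer q₁ = y := A.layer_muHat hy1 hlρn₁
  have Tracky := A.trackFrom hstep (x := y) (n := n₁) hy1 hev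
  have hq₁safe : A.SafeInf y q₁ (wordDrop w n₁) := by
    intro m
    unfold SafeFin
    rw [A.muHat_self hq₁l, (Tracky m).2]
    rfl
  -- the no-escape property for q₁
  have noesc : ∀ (n : ℕ) (p' : Q), A.layer p' = y + 1 →
      A.runList q₁ (wordPrefix (wordDrop w n₁) n) = some (A.μ p') →
      ¬ A.SafeInf (y + 1) p' (wordDrop w (n₁ + n)) := by
    intro n p' hlayp' hrq hsf
    set N₀ := n₁ + n with hN₀
    have hn₁N₀ : n₁ ≤ N₀ := by omega
    -- the escape run R at layer y+1
    have hRex : ∀ m, ∃ r, A.runList p' (wordPrefix (wordDrop w N₀) m) = some r := by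
      intro m
      have hs := hsf m
      unfold SafeFin at hs
      rw [A.muHat_self hlayp'] at hs
      exact Option.isSome_iff_exists.mp hs
    choose R hRs using hRex
    have hRlay : ∀ m, A.layer (R m) = y + 1 := fun m => by
      rw [A.runList_layer (hRs m), hlayp']
    -- key relation between R and the semantic run
    have mKey : ∀ m, A.μ (R m) = A.muHat y (ρ (N₀ + m)) := by
      intro m
      have h1 := (Tracky (n + m)).2
      rw [wordPrefix_add, runList_append, hrq, Option.bind_some, wordDrop_wordDrop] at h1
      have h2 := A.runList_mu (k := 1) (hRs m)
      simp only [Function.iterate_one] at h2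
      rw [h2] at h1
      have h3 := Option.some.inj h1
      rw [← Nat.add_assoc] at h3
      exact h3
    classical
    -- the set of y-positions
    set YP : Set ℕ := {i | N₀ ≤ i ∧ A.layerOf (ρ i) (w i) = y} with hYP
    have hYPinf : YP.Infinite := by
      apply Set.infinite_of_not_bddAbove
      rw [not_bddAbove_iff]
      intro b
      obtain ⟨i, hi1, hi2⟩ := hio (max N₀ (b + 1))
      refine ⟨i, ⟨le_trans (le_max_left _ _) hi1, hi2⟩, ?_⟩
      have := le_trans (le_max_right _ _) hi1
      omega
    -- C1: at each y-position, the chosen successor carries a long suffix token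
    have C1 : ∀ i, i ∈ YP → (y + 1 ≤ A.layer (ρ (i + 1))) ∧ ∃ t, A.layer t = y + 1 ∧
        A.runList t (wordPrefix (wordDrop w N₀) (i + 1 - N₀)) =
          some (A.muHat (y + 1) (ρ (i + 1))) := by
      intro i hi
      have hiN : N₀ ≤ i := hi.1
      have hiy : A.layerOf (ρ i) (w i) = y := hi.2
      set m := i - N₀ with hm
      have hchoice : ρ (i + 1) = A.lsChoice (histOf ρ w i) (ρ i) (w i) := by
        apply hls i
        show Even (A.layerOf (ρ i) (w i)) ↔ ¬ Even xs
        rw [hiy]; exact hEy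
      have hword : (histOf ρ w i).map Prod.snd ++ [w i] = wordPrefix w (i + 1) := by
        rw [histOf_map_snd, wordPrefix_succ]
      have hmax := A.lsChoice_max (histOf ρ w i) (ρ i) (w i)
      rw [← hchoice] at hmax
      have hprio : A.semPrio (ρ i) (w i) = y := hiy
      obtain ⟨c, hcleaf, hcle, hcmu⟩ := A.exists_leaf_above (R (m + 1))
      rw [hRlay (m + 1)] at hcle hcmu
      have hmustep : A.δ (A.muHat y (ρ i)) (w i) = some (A.muHat y (ρ (i + 1))) :=
        (A.semStep_proj (hstep i) hy1 (by rw [hiy])).1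
      have hmuKey : A.μ (R (m + 1)) = A.muHat y (ρ (i + 1)) := by
        have h5 := mKey (m + 1)
        rw [show N₀ + (m + 1) = i + 1 by omega] at h5
        exact h5
      have hcmuy : A.muHat y c = A.μ (R (m + 1)) := by
        rw [← A.muHat_muHat hy1 (Nat.le_succ y) hcle, hcmu,
          ← A.muHat_mu_succ hy1 (by rw [hRlay (m + 1)]; omega),
          A.muHat_self (hRlay (m + 1))]
      have hcstep : A.semStep (ρ i) (w i) c := by
        refine ⟨hcleaf, ?_⟩
        show A.δ (A.muHat (A.layerOf (ρ i) (w i)) (ρ i)) (w i)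
          = some (A.muHat (A.layerOf (ρ i) (w i)) c)
        rw [hiy, hcmuy, hmuKey, hmustep]
      have hclsl : m + 1 ≤ A.longestSuffixLen (wordPrefix w (i + 1)) (A.muHat (y + 1) c) := by
        rw [hcmu]
        apply Nat.le_findGreatest (by rw [length_wordPrefix]; omega)
        refine ⟨by rw [length_wordPrefix]; omega, ?_⟩
        rw [length_wordPrefix, show i + 1 - (m + 1) = N₀ by omega,
          drop_wordPrefix (by omega), show i + 1 - N₀ = m + 1 by omega]
        exact ⟨p', by rw [hRlay, hlayp'], hRs (m + 1)⟩
      have hslsl : m + 1 ≤ A.longestSuffixLen (wordPrefix w (i + 1))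
          (A.muHat (y + 1) (ρ (i + 1))) := by
        have h6 := hmax c hcstep
        rw [hword, hprio] at h6
        exact le_trans hclsl h6
      have hlay1 : y + 1 ≤ A.layer (ρ (i + 1)) := by
        by_contra hlt
        push_neg at hlt
        have hge : y ≤ A.layer (ρ (i + 1)) :=
          le_trans (hev (i + 1) (by omega)) (A.layerOf_le _ _)
        have heq : A.layer (ρ (i + 1)) = y := by omega
        have hnl := (hstep i).1 (R (m + 1)) (by rw [hRlay]; omega)
        apply hnl
        rw [hmuKey, A.muHat_self heq]
      refine ⟨hlay1, ?_⟩
      have hslay : A.layer (A.muHat (y + 1) (ρ (i + 1))) = y + 1 :=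
        A.layer_muHat (by omega) hlay1
      set s := A.muHat (y + 1) (ρ (i + 1)) with hs
      set L := A.longestSuffixLen (wordPrefix w (i + 1)) s with hL
      have hLpos : m + 1 ≤ L := hslsl
      have hPL : L ≤ (wordPrefix w (i + 1)).length ∧
          A.suffixReaches s ((wordPrefix w (i + 1)).drop ((wordPrefix w (i + 1)).length - L)) := by
        have h0 : Nat.findGreatest (fun k => k ≤ (wordPrefix w (i + 1)).length ∧
            A.suffixReaches s ((wordPrefix w (i + 1)).drop ((wordPrefix w (i + 1)).length - k)))
            (wordPrefix w (i + 1)).length = L := rfl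
        have h7 := (Nat.findGreatest_eq_iff.mp h0).2.1 (by omega)
        exact h7
      obtain ⟨hL1, hsr'⟩ := hPL
      rw [length_wordPrefix] at hL1
      obtain ⟨pw, hpwlay, hpwrun⟩ := hsr'
      rw [length_wordPrefix, drop_wordPrefix (by omega)] at hpwrun
      rw [show i + 1 - (i + 1 - L) = (N₀ - (i + 1 - L)) + (m + 1) by omega,
        wordPrefix_add, runList_append] at hpwrun
      cases hsplit : A.runList pw (wordPrefix (wordDrop w (i + 1 - L)) (N₀ - (i + 1 - L))) with
      | none => rw [hsplit] at hpwrun; simp at hpwrun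
      | some t =>
          rw [hsplit, Option.bind_some, wordDrop_wordDrop,
            show i + 1 - L + (N₀ - (i + 1 - L)) = N₀ by omega] at hpwrun
          refine ⟨t, ?_, ?_⟩
          · rw [A.runList_layer hsplit, hpwlay, hslay]
          · rw [show i + 1 - N₀ = m + 1 by omega]
            exact hpwrun
    -- choose the token of each y-position
    have hTex : ∀ i, ∃ t, i ∈ YP → (A.layer t = y + 1 ∧
        A.runList t (wordPrefix (wordDrop w N₀) (i + 1 - N₀)) =
          some (A.muHat (y + 1) (ρ (i + 1)))) := by
      intro i
      by_cases hi : i ∈ YP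
      · obtain ⟨_, t, h1, h2⟩ := C1 i hi
        exact ⟨t, fun _ => ⟨h1, h2⟩⟩
      · exact ⟨l, fun h => absurd h hi⟩
    choose T hTs using hTex
    -- the token run survives between consecutive y-positions
    have seg : ∀ i, i ∈ YP → ∀ k, i + 1 ≤ k →
        (∀ j', i < j' → j' < k → j' ∉ YP) →
        (y + 1 ≤ A.layer (ρ k) ∧
          A.runList (T i) (wordPrefix (wordDrop w N₀) (k - N₀)) =
            some (A.muHat (y + 1) (ρ k))) := by
      intro i hi k hk
      induction k, hk using Nat.le_induction with
      | base =>
          intro _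
          exact ⟨(C1 i hi).1, (hTs i hi).2⟩
      | succ k hk ih =>
          intro hno
          obtain ⟨hlk, hrk⟩ := ih (fun j' h1 h2 => hno j' h1 (by omega))
          have hkN : N₀ ≤ k := le_trans hi.1 (by omega)
          have hky : A.layerOf (ρ k) (w k) ≠ y := by
            intro hkeq
            exact hno k (by omega) (by omega) ⟨hkN, hkeq⟩
          have hky' : y + 1 ≤ A.layerOf (ρ k) (w k) := by
            have := hev k (le_trans hn₁N₀ hkN)
            omega
          obtain ⟨hδ, hl'⟩ := A.semStep_proj (hstep k) (by omega) hky'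
          refine ⟨hl', ?_⟩
          have hw : wordDrop w N₀ (k - N₀) = w k := by
            show w (N₀ + (k - N₀)) = w k
            rw [show N₀ + (k - N₀) = k by omega]
          rw [show k + 1 - N₀ = (k - N₀) + 1 by omega, wordPrefix_succ,
            runList_append, hrk, Option.bind_some, runList_singleton, hw, hδ]
    -- the token run dies at the next y-position
    have C2 : ∀ i, i ∈ YP → ∀ j, j ∈ YP → i < j →
        A.runList (T i) (wordPrefix (wordDrop w N₀) (j + 1 - N₀)) = none := by
      intro i hi j hj hij
      have hPex : ∃ k, i < k ∧ k ∈ YP := ⟨j, hij, hj⟩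
      set m' := Nat.find hPex with hm'
      obtain ⟨hm'1, hm'2⟩ := Nat.find_spec hPex
      have hm'le : m' ≤ j := Nat.find_min' hPex ⟨hij, hj⟩
      have hno : ∀ j', i < j' → j' < m' → j' ∉ YP := by
        intro j' h1 h2 hmem
        exact Nat.find_min hPex h2 ⟨h1, hmem⟩
      obtain ⟨hlm', hrm'⟩ := seg i hi m' (by omega) hno
      have hm'N : N₀ ≤ m' := le_trans hi.1 (by omega)
      have hm'y : A.layerOf (ρ m') (w m') = y := hm'2.2
      have hdead : A.δ (A.muHat (y + 1) (ρ m')) (w m') = none :=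
        A.layerOf_gt_none (by rw [hm'y]; omega) hlm'
      have hnone : A.runList (T i) (wordPrefix (wordDrop w N₀) (m' + 1 - N₀)) = none := by
        have hw : wordDrop w N₀ (m' - N₀) = w m' := by
          show w (N₀ + (m' - N₀)) = w m'
          rw [show N₀ + (m' - N₀) = m' by omega]
        rw [show m' + 1 - N₀ = (m' - N₀) + 1 by omega, wordPrefix_succ, runList_append,
          hrm', Option.bind_some, runList_singleton, hw, hdead]
      rw [show j + 1 - N₀ = (m' + 1 - N₀) + ((j + 1 - N₀) - (m' + 1 - N₀)) by omega,
        wordPrefix_add]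
      exact A.runList_none_append hnone
    -- pigeonhole: T is injective on the infinite set YP
    have hinj : ∀ i, i ∈ YP → ∀ j, j ∈ YP → i ≠ j → T i ≠ T j := by
      intro i hi j hj hne heq
      rcases Nat.lt_or_ge i j with hij | hge
      · have h1 := C2 i hi j hj hij
        have h2 := (hTs j hj).2
        rw [heq] at h1
        rw [h1] at h2
        exact Option.some_ne_none _ h2.symm
      · have hij : j < i := by omega
        have h1 := C2 j hj i hi hij
        have h2 := (hTs i hi).2
        rw [← heq] at h1
        rw [h1] at h2
        exact Option.some_ne_none _ h2.symm
    have hfin : YP.Finite := by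
      have hinj' : Function.Injective (fun i : YP => T (i : ℕ)) := by
        intro ⟨i, hi⟩ ⟨j, hj⟩ hTeq
        by_contra hne'
        exact hinj i hi j hj (fun h => hne' (Subtype.ext h)) hTeq
      exact Set.finite_coe_iff.mp (Finite.of_injective _ hinj')
    exact hYPinf hfin
  -- shift p₀ forward to position n₁
  have hn₀n₁ : n₀ ≤ n₁ := le_max_left _ _
  have hp₁ex : ∃ p₁, A.runList p₀ (wordPrefix (wordDrop w n₀) (n₁ - n₀)) = some p₁ := by
    have := hsafe₀ (n₁ - n₀)
    unfold SafeFin at this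
    rw [A.muHat_self hp₀l] at this
    exact Option.isSome_iff_exists.mp this
  obtain ⟨p₁, hp₁run⟩ := hp₁ex
  have hsafe₀' : A.SafeInf (A.layer p₀) p₀ (wordDrop w n₀) := by rw [hp₀l]; exact hsafe₀
  have hne₀' : ∀ (n : ℕ) (p' : Q), A.layer p' = A.layer p₀ + 1 →
      A.runList p₀ (wordPrefix (wordDrop w n₀) n) = some (A.μ p') →
      ¬ A.SafeInf (A.layer p') p' (wordDrop (wordDrop w n₀) n) := by
    rw [hp₀l]; exact hne₀
  obtain ⟨hl₁, hsafe₁, hne₁⟩ := A.strong_shift hsafe₀' hne₀' hp₁run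
  have hdd : wordDrop (wordDrop w n₀) (n₁ - n₀) = wordDrop w n₁ := by
    rw [wordDrop_wordDrop, Nat.add_sub_cancel' hn₀n₁]
  rw [hdd] at hsafe₁ hne₁
  have hl₁xs : A.layer p₁ = xs := by rw [hl₁, hp₀l]
  -- the layer-1 ancestors coincide
  have hone : A.muHat 1 p₁ = A.muHat 1 q₁ := by
    have h1 : A.muHat 1 q₁ = A.muHat 1 (ρ n₁) := A.muHat_muHat le_rfl hy1 hlρn₁
    have h2 := A.track_one hstep n₁
    rw [hρ0, hl1] at h2
    have h3 : A.runList q0 (wordPrefix w n₁) = some (A.muHat 1 p₁) := by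
      have hsplit : wordPrefix w n₁ = wordPrefix w n₀ ++ wordPrefix (wordDrop w n₀) (n₁ - n₀) := by
        rw [← wordPrefix_add]
        congr 1
        omega
      rw [hsplit, runList_append, hq0run, Option.bind_some]
      have h4 := A.runList_mu (k := xs - 1) hp₁run
      rw [← A.muHat_iterate (x := 1) hp₀l, ← A.muHat_iterate (x := 1) hl₁xs] at h4
      exact h4
    rw [h1]
    rw [h3] at h2
    exact Option.some.inj h2
  -- derive the contradiction with consistency
  by_cases hxe : Even xs
  · have hyo : ¬ Even y := by rw [hEy]; exact fun h => h hxe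
    apply hcons
    refine ⟨p₁, q₁, wordDrop w n₁, hone, ?_, ?_⟩
    · exact ⟨by rw [hl₁xs]; exact hxe, by rw [hl₁xs] at hsafe₁ ⊢; exact hsafe₁, by
        intro n p' hlay hrun'
        exact hne₁ n p' (by rw [hlay]) hrun'⟩
    · refine ⟨by rw [hq₁l]; exact Nat.not_even_iff_odd.mp hyo, ?_, ?_⟩
      · rw [hq₁l]; exact hq₁safe
      · intro n p' hlay hrun'
        rw [hq₁l] at hlay
        have := noesc n p' hlay hrun'
        rw [hlay, wordDrop_wordDrop]
        exact this
  · have hye : Even y := hEy.mpr hxe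
    apply hcons
    refine ⟨q₁, p₁, wordDrop w n₁, hone.symm, ?_, ?_⟩
    · refine ⟨by rw [hq₁l]; exact hye, ?_, ?_⟩
      · rw [hq₁l]; exact hq₁safe
      · intro n p' hlay hrun'
        rw [hq₁l] at hlay
        have := noesc n p' hlay hrun'
        rw [hlay, wordDrop_wordDrop]
        exact this
    · exact ⟨by rw [hl₁xs]; exact Nat.not_even_iff_odd.mp hxe,
        by rw [hl₁xs] at hsafe₁ ⊢; exact hsafe₁, by
        intro n p' hlay hrun'
        exact hne₁ n p' (by rw [hlay]) hrun'⟩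

end Layered
namespace Layered

variable {Q α : Type} {d : ℕ} (A : Layered Q α d)

theorem unifSD_of_consistent [Fintype Q] (hd : 1 ≤ d) (hcons : A.Consistent) : A.UnifSD := by
  suffices key : ∀ (w : ℕ → α) (q0 : Q), A.layer q0 = 1 → ∀ l, A.IsLeaf l → A.muHat 1 l = q0 →
      (A.SemAccept l w ↔ Even (Nat.findGreatest (fun x => A.UltSafeFrom q0 x w) d)) by
    intro p q hp hq hμ w
    have hq0 : A.layer (A.muHat 1 p) = 1 := A.layer_muHat le_rfl (A.layer_pos p)
    rw [key w (A.muHat 1 p) hq0 p hp rfl, key w (A.muHat 1 p) hq0 q hq hμ.symm]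
  intro w q0 hq0lay l hleaf hl1
  have hmem1 : A.UltSafeFrom q0 1 w := by
    refine ⟨0, q0, hq0lay, ?_, ?_⟩
    · rw [A.muHat_self hq0lay]; simp [wordPrefix, runList]
    · intro m
      unfold SafeFin
      rw [A.muHat_self hq0lay]
      exact A.complete_runList hq0lay _
  set xs := Nat.findGreatest (fun x => A.UltSafeFrom q0 x w) d with hxs
  have hx1 : 1 ≤ xs := Nat.le_findGreatest hd hmem1
  have hxmem : A.UltSafeFrom q0 xs w :=
    Nat.findGreatest_spec (P := fun x => A.UltSafeFrom q0 x w) (m := 1) hd hmem1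
  have hmax : ∀ z, A.UltSafeFrom q0 z w → z ≤ xs := by
    intro z hz
    by_contra hgt
    push_neg at hgt
    have hzd : z ≤ d := by
      obtain ⟨nz, pz, hpz, -, -⟩ := hz
      rw [← hpz]; exact A.layer_le pz
    exact Nat.findGreatest_is_greatest hgt hzd hz
  obtain ⟨n₀, p₀, hp₀l, hq0run0, hsafe₀⟩ := hxmem
  have hne₀ : ∀ (m : ℕ) (p'' : Q), A.layer p'' = xs + 1 →
      A.runList p₀ (wordPrefix (wordDrop w n₀) m) = some (A.μ p'') →
      ¬ A.SafeInf (A.layer p'') p'' (wordDrop (wordDrop w n₀) m) := by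
    intro m p'' hlay hrun hsf
    have hult : A.UltSafeFrom q0 (xs + 1) w := by
      refine ⟨n₀ + m, p'', hlay, ?_, ?_⟩
      · rw [wordPrefix_add, runList_append, hq0run0, Option.bind_some]
        have h4 := A.runList_mu (k := xs - 1) hrun
        rw [← A.muHat_iterate (x := 1) hp₀l] at h4
        have h5 : (A.μ)^[xs - 1] (A.μ p'') = A.muHat 1 p'' := by
          rw [A.muHat_iterate (x := 1) hlay, show xs + 1 - 1 = (xs - 1) + 1 by omega,
            Function.iterate_succ_apply]
        rw [h5] at h4
        exact h4
      · rw [hlay, wordDrop_wordDrop] at hsf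
        exact hsf
    have := hmax _ hult
    omega
  by_cases hxe : Even xs
  · constructor
    · intro _; exact hxe
    · intro _
      refine ⟨fun h q a => A.lsChoice h q a, fun h q a _ => A.lsChoice_semStep h q a, ?_⟩
      intro ρ hsr hce
      have hls : ∀ i, (Even (A.semPrio (ρ i) (w i)) ↔ ¬ Even xs) →
          ρ (i + 1) = A.lsChoice (histOf ρ w i) (ρ i) (w i) := by
        intro i hcond
        apply hce i
        rw [← Nat.not_even_iff_odd]
        intro hevp
        exact (hcond.mp hevp) hxe
      have hpar := A.run_parity hcons hx1 hp₀l hq0run0 hsafe₀ hne₀ hl1 hsr hls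
      unfold ParityAccept
      exact hpar.mpr hxe
  · constructor
    · intro hacc
      exfalso
      obtain ⟨σ, hσ, hall⟩ := hacc
      obtain ⟨ρ, hsr, hodd, heven⟩ := A.exists_run w l σ (fun h q a => A.lsChoice h q a) hσ
        (fun h q a _ => A.lsChoice_semStep h q a)
      have hce : A.ConsEve σ w ρ := hodd
      have hP := hall ρ hsr hce
      have hls : ∀ i, (Even (A.semPrio (ρ i) (w i)) ↔ ¬ Even xs) →
          ρ (i + 1) = A.lsChoice (histOf ρ w i) (ρ i) (w i) := by
        intro i hcond
        exact heven i (hcond.mpr hxe)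
      have hpar := A.run_parity hcons hx1 hp₀l hq0run0 hsafe₀ hne₀ hl1 hsr hls
      unfold ParityAccept at hP
      exact hxe (hpar.mp hP)
    · intro hevxs
      exact absurd hevxs hxe

end Layered
/-- A layered automaton is consistent if and only if it is uniformly
semantically deterministic. -/
theorem statement_1 {Q α : Type} [Fintype Q] [Fintype α] [Nonempty α] {d : ℕ} (hd : 1 ≤ d)
    (A : Layered Q α d) :
    A.Consistent ↔ A.UnifSD :=
  ⟨fun hcons => A.unifSD_of_consistent hd hcons, fun h => A.consistent_of_unifSD h⟩
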